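/- If M is a completely positive n×n matrix with at least one zero entry, then cp-rank(M) ≤ 2 p_{n−1}, where p_{n−1} is the maximal cp-rank over completely positive (n−1)×(n−1) matrices. -/

import Mathlib

open Matrix BigOperators

def Copositive {ι : Type} [Fintype ι] (A : Matrix ι ι ℝ) : Prop :=
  A.IsSymm ∧ ∀ x : ι → ℝ, (∀ i, 0 ≤ x i) → 0 ≤ x ⬝ᵥ A.mulVec x

def CompletelyPositive {ι : Type} [Fintype ι] (M : Matrix ι ι ℝ) : Prop :=
  ∃ (p : ℕ) (v : Fin p → ι → ℝ), (∀ j i, 0 ≤ v j i) ∧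
    M = ∑ j, Matrix.vecMulVec (v j) (v j)

noncomputable def cpRank {ι : Type} [Fintype ι] (M : Matrix ι ι ℝ) : ℕ :=
  sInf {p : ℕ | ∃ v : Fin p → ι → ℝ, (∀ j i, 0 ≤ v j i) ∧
    M = ∑ j, Matrix.vecMulVec (v j) (v j)}

noncomputable def pmax (n : ℕ) : ℕ :=
  sSup {k : ℕ | ∃ M : Matrix (Fin n) (Fin n) ℝ, CompletelyPositive M ∧ cpRank M = k}

def ExtremeCopositive {ι : Type} [Fintype ι] (A : Matrix ι ι ℝ) : Prop :=
  Copositive A ∧ A ≠ 0 ∧ ∀ B C : Matrix ι ι ℝ, Copositive B → Copositive C → A = B + C →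
    ∃ s t : ℝ, 0 ≤ s ∧ 0 ≤ t ∧ B = s • A ∧ C = t • A

def E12 (k : ℕ) : Matrix (Fin k) (Fin k) ℝ :=
  Matrix.of fun i j => if (i.val = 0 ∧ j.val = 1) ∨ (i.val = 1 ∧ j.val = 0) then 1 else 0

def InOrbitOfE12 {k : ℕ} (S : Matrix (Fin k) (Fin k) ℝ) : Prop :=
  ∃ (d : Fin k → ℝ) (σ : Equiv.Perm (Fin k)), (∀ i, 0 < d i) ∧
    S = Matrix.diagonal d * (σ.permMatrix ℝ)ᵀ * E12 k * σ.permMatrix ℝ * Matrix.diagonal d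

lemma smul_vecMulVec {ι : Type} {c : ℝ} (hc : 0 ≤ c) (u : ι → ℝ) :
    c • Matrix.vecMulVec u u
      = Matrix.vecMulVec (Real.sqrt c • u) (Real.sqrt c • u) := by
  ext i j
  simp only [Matrix.smul_apply, Matrix.vecMulVec_apply, Pi.smul_apply, smul_eq_mul]
  have h : Real.sqrt c * Real.sqrt c = c := Real.mul_self_sqrt hc
  linear_combination (u i * u j) * h.symm

lemma cpRank_le_bound {n : ℕ} (M : Matrix (Fin n) (Fin n) ℝ)
    (hM : CompletelyPositive M) : cpRank M ≤ n * n + 1 := by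
  obtain ⟨p, v, hv, hMv⟩ := hM
  rcases Nat.eq_zero_or_pos p with hp | hp
  · subst hp
    have h0 : cpRank M ≤ 0 := Nat.sInf_le ⟨v, hv, hMv⟩
    omega
  -- M ∈ convexHull of rank-1 nonneg matrices
  set S : Set (Matrix (Fin n) (Fin n) ℝ) :=
    {A | ∃ u : Fin n → ℝ, (∀ i, 0 ≤ u i) ∧ A = Matrix.vecMulVec u u} with hS
  have hmem : M ∈ convexHull ℝ S := by
    have := Finset.centerMass_mem_convexHull (s := S) (Finset.univ : Finset (Fin p))
      (w := fun _ => (1:ℝ)) (z := fun j => (p:ℝ) • Matrix.vecMulVec (v j) (v j))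
      (fun i _ => zero_le_one)
      (by simp [Finset.sum_const]; positivity)
      (fun j _ => ⟨Real.sqrt p • v j,
        fun i => by
          simp only [Pi.smul_apply, smul_eq_mul]
          have := hv j i; positivity,
        by rw [← _root_.smul_vecMulVec (by positivity) (v j)]⟩)
    have hc : (Finset.univ : Finset (Fin p)).centerMass (fun _ => (1:ℝ))
        (fun j => (p:ℝ) • Matrix.vecMulVec (v j) (v j)) = M := by
      rw [Finset.centerMass]
      simp only [Finset.sum_const, Finset.card_univ, Fintype.card_fin, nsmul_eq_mul,
        mul_one, one_smul]
      rw [← Finset.smul_sum, inv_smul_smul₀ (by exact_mod_cast hp.ne'), hMv]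
    rwa [hc] at this
  obtain ⟨ι, hι, z, w, hzS, hai, hw, hw1, hsum⟩ :=
    eq_pos_convex_span_of_mem_convexHull hmem
  have hcard : Fintype.card ι ≤ n * n + 1 := by
    have h1 := hai.card_le_finrank_succ
    have h2 : Module.finrank ℝ (vectorSpan ℝ (Set.range z)) ≤
        Module.finrank ℝ (Matrix (Fin n) (Fin n) ℝ) := Submodule.finrank_le _
    have h3 : Module.finrank ℝ (Matrix (Fin n) (Fin n) ℝ) = n * n := by
      rw [Module.finrank_matrix]; simp
    omega
  -- build a decomposition of size card ι
  choose u hu hzu using fun i => hzS (Set.mem_range_self i)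
  set m := Fintype.card ι with hm
  let e : Fin m ≃ ι := (Fintype.equivFin ι).symm
  have hdecomp : M = ∑ k : Fin m,
      Matrix.vecMulVec (Real.sqrt (w (e k)) • u (e k)) (Real.sqrt (w (e k)) • u (e k)) := by
    rw [← hsum]
    rw [← Equiv.sum_comp e (fun i => w i • z i)]
    refine Finset.sum_congr rfl fun k _ => ?_
    rw [hzu (e k), smul_vecMulVec (le_of_lt (hw (e k)))]
  have : cpRank M ≤ m := Nat.sInf_le ⟨fun k => Real.sqrt (w (e k)) • u (e k),
    fun k i => by
      simp only [Pi.smul_apply, smul_eq_mul]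
      have := hu (e k) i; positivity, hdecomp⟩
  omega

lemma cpRank_le_pmax {n : ℕ} (M : Matrix (Fin n) (Fin n) ℝ)
    (hM : CompletelyPositive M) : cpRank M ≤ pmax n := by
  refine le_csSup ⟨n * n + 1, ?_⟩ ⟨M, hM, rfl⟩
  rintro k ⟨N, hN, rfl⟩
  exact cpRank_le_bound N hN

lemma cpRank_exists_decomp {ι : Type} [Fintype ι] (M : Matrix ι ι ℝ)
    (hM : CompletelyPositive M) :
    ∃ v : Fin (cpRank M) → ι → ℝ, (∀ j i, 0 ≤ v j i) ∧
      M = ∑ j, Matrix.vecMulVec (v j) (v j) := by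
  obtain ⟨p, v, hv, hMv⟩ := hM
  exact Nat.sInf_mem (⟨p, v, hv, hMv⟩ : Set.Nonempty {p : ℕ | ∃ v : Fin p → ι → ℝ,
    (∀ j i, 0 ≤ v j i) ∧ M = ∑ j, Matrix.vecMulVec (v j) (v j)})

lemma cpRank_add_le {ι : Type} [Fintype ι] (A B : Matrix ι ι ℝ)
    (hA : CompletelyPositive A) (hB : CompletelyPositive B) :
    cpRank (A + B) ≤ cpRank A + cpRank B := by
  obtain ⟨va, hva, hA'⟩ := cpRank_exists_decomp A hA
  obtain ⟨vb, hvb, hB'⟩ := cpRank_exists_decomp B hB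
  refine Nat.sInf_le ⟨Fin.append va vb, ?_, ?_⟩
  · intro j i
    refine Fin.addCases (fun k => ?_) (fun k => ?_) j
    · rw [Fin.append_left]; exact hva k i
    · rw [Fin.append_right]; exact hvb k i
  · rw [Fin.sum_univ_add]
    simp only [Fin.append_left, Fin.append_right]
    rw [← hA', ← hB']

lemma cpRank_le_pmax_of_zero_line {m : ℕ} (N : Matrix (Fin (m+1)) (Fin (m+1)) ℝ)
    (a : Fin (m+1)) (p : ℕ) (v : Fin p → Fin (m+1) → ℝ) (hv : ∀ j i, 0 ≤ v j i)
    (hz : ∀ j, v j a = 0) (hN : N = ∑ j, Matrix.vecMulVec (v j) (v j)) :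
    cpRank N ≤ pmax m := by
  have hNe : ∀ i i', N i i' = ∑ j, v j i * v j i' := by
    intro i i'
    rw [hN, Matrix.sum_apply]
    simp [Matrix.vecMulVec_apply]
  set N' : Matrix (Fin m) (Fin m) ℝ :=
    Matrix.of fun i j => N (a.succAbove i) (a.succAbove j) with hN'def
  have hCP : CompletelyPositive N' := by
    refine ⟨p, fun j => v j ∘ a.succAbove, fun j i => hv _ _, ?_⟩
    ext i j
    rw [hN'def]
    simp [hNe, Matrix.sum_apply, Matrix.vecMulVec_apply]
  obtain ⟨w, hw, hNw⟩ := cpRank_exists_decomp N' hCP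
  have hN'e : ∀ k k', N (a.succAbove k) (a.succAbove k') = ∑ j, w j k * w j k' := by
    intro k k'
    have h : N' k k' = (∑ j, Matrix.vecMulVec (w j) (w j)) k k' := by rw [← hNw]
    simpa [hN'def, Matrix.sum_apply, Matrix.vecMulVec_apply] using h
  set W : Fin (cpRank N') → Fin (m+1) → ℝ :=
    fun j => Fin.insertNth (α := fun _ => ℝ) a 0 (w j) with hWdef
  have hWa : ∀ j, W j a = 0 := fun j => Fin.insertNth_apply_same (α := fun _ => ℝ) a 0 (w j)
  have hWs : ∀ j k, W j (a.succAbove k) = w j k :=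
    fun j k => Fin.insertNth_apply_succAbove (α := fun _ => ℝ) a 0 (w j) k
  have key : cpRank N ≤ cpRank N' := by
    refine Nat.sInf_le ⟨W, ?_, ?_⟩
    · intro j i
      refine Fin.succAboveCases (α := fun i => 0 ≤ W j i) a ?_ (fun k => ?_) i
      · rw [hWa]
      · rw [hWs]; exact hw j k
    · ext i i'
      rw [Matrix.sum_apply]
      simp only [Matrix.vecMulVec_apply]
      refine Fin.succAboveCases (α := fun i => N i i' =
          ∑ j, W j i * W j i') a ?_ (fun k => ?_) i
      · rw [hNe]
        simp [hz, hWa]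
      · refine Fin.succAboveCases (α := fun i' => N (a.succAbove k) i' =
            ∑ j, W j (a.succAbove k) * W j i') a ?_ (fun k' => ?_) i'
        · rw [hNe]
          simp [hz, hWa]
        · rw [hN'e k k']
          simp [hWs]
  exact key.trans (cpRank_le_pmax N' hCP)

theorem stmt19 {n : ℕ} (M : Matrix (Fin n) (Fin n) ℝ) (hM : CompletelyPositive M)
    (hzero : ∃ i j, M i j = 0) :
    cpRank M ≤ 2 * pmax (n - 1) := by
  obtain ⟨i, j, hij⟩ := hzero
  match n, M, hM, i, j, hij with
  | 0, M, hM, i, j, hij => exact i.elim0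
  | m + 1, M, hM, i, j, hij => ?_
  show cpRank M ≤ 2 * pmax m
  obtain ⟨p, v, hv, hMv⟩ := hM
  have hMe : ∀ a b, M a b = ∑ k, v k a * v k b := by
    intro a b
    rw [hMv, Matrix.sum_apply]
    simp [Matrix.vecMulVec_apply]
  by_cases hd : i = j
  · -- diagonal zero: all v k i = 0
    subst hd
    have hsq : ∀ k : Fin p, v k i = 0 := by
      intro k
      have h0 : ∑ k, v k i * v k i = 0 := by rw [← hMe i i, hij]
      have := (Finset.sum_eq_zero_iff_of_nonneg
        (fun k _ => mul_self_nonneg (v k i))).mp h0 k (Finset.mem_univ k)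
      nlinarith [this]
    have h1 : cpRank M ≤ pmax m :=
      cpRank_le_pmax_of_zero_line M i p v hv hsq hMv
    have h2 : pmax m ≤ 2 * pmax m := by omega
    omega
  · -- off-diagonal zero
    have hprod : ∀ k : Fin p, v k i * v k j = 0 := by
      intro k
      have h0 : ∑ k, v k i * v k j = 0 := by rw [← hMe i j, hij]
      exact (Finset.sum_eq_zero_iff_of_nonneg
        (fun k _ => mul_nonneg (hv k i) (hv k j))).mp h0 k (Finset.mem_univ k)
    set v1 : Fin p → Fin (m+1) → ℝ := fun k => if v k i = 0 then v k else 0 with hv1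
    set v2 : Fin p → Fin (m+1) → ℝ := fun k => if v k i = 0 then 0 else v k with hv2
    set M1 : Matrix (Fin (m+1)) (Fin (m+1)) ℝ := ∑ k, Matrix.vecMulVec (v1 k) (v1 k) with hM1
    set M2 : Matrix (Fin (m+1)) (Fin (m+1)) ℝ := ∑ k, Matrix.vecMulVec (v2 k) (v2 k) with hM2
    have hv1n : ∀ k a, 0 ≤ v1 k a := by
      intro k a; rw [hv1]; dsimp only
      split <;> simp [hv k a]
    have hv2n : ∀ k a, 0 ≤ v2 k a := by
      intro k a; rw [hv2]; dsimp only
      split <;> simp [hv k a]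
    have hv1z : ∀ k, v1 k i = 0 := by
      intro k; rw [hv1]; dsimp only
      split <;> simp_all
    have hv2z : ∀ k, v2 k j = 0 := by
      intro k; rw [hv2]; dsimp only
      split
      · simp
      · rcases mul_eq_zero.mp (hprod k) with h | h
        · simp_all
        · exact h
    have hsplit : M = M1 + M2 := by
      rw [hMv, hM1, hM2, ← Finset.sum_add_distrib]
      refine Finset.sum_congr rfl fun k _ => ?_
      rw [hv1, hv2]; dsimp only
      by_cases h : v k i = 0 <;> simp [h] <;> ext a b <;>
        simp [Matrix.vecMulVec_apply, Matrix.add_apply]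
    have hCP1 : CompletelyPositive M1 := ⟨p, v1, hv1n, hM1⟩
    have hCP2 : CompletelyPositive M2 := ⟨p, v2, hv2n, hM2⟩
    have h1 : cpRank M1 ≤ pmax m := cpRank_le_pmax_of_zero_line M1 i p v1 hv1n hv1z hM1
    have h2 : cpRank M2 ≤ pmax m := cpRank_le_pmax_of_zero_line M2 j p v2 hv2n hv2z hM2
    have h3 : cpRank M ≤ cpRank M1 + cpRank M2 := by
      rw [hsplit]; exact cpRank_add_le M1 M2 hCP1 hCP2
    omega
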